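/- For any μ₁, μ₂, λ > 0, the total variation distance between IG(μ₁, λ) and IG(μ₂, λ) is at most √(4λ/(π·min{μ₁, μ₂})) (indeed at most 2√(λ/(π·min{μ₁,μ₂}))). -/

import Mathlib

open MeasureTheory Set Real

/-- density of the inverse Gaussian distribution `IG(μ,λ)` on `(0,∞)` -/
noncomputable def igPdf (μ lam x : ℝ) : ℝ :=
  Real.sqrt (lam / (2 * Real.pi * x ^ 3)) * Real.exp (-lam * (x - μ) ^ 2 / (2 * μ ^ 2 * x))

/-- the inverse Gaussian distribution `IG(μ,λ)` as a measure on `ℝ` -/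
noncomputable def igMeasure (μ lam : ℝ) : Measure ℝ :=
  volume.withDensity fun x => ENNReal.ofReal (if 0 < x then igPdf μ lam x else 0)

noncomputable def levyE (β u : ℝ) : ℝ := Real.exp (-(u - β/u)^2/2)

lemma levyE_nonneg (β u : ℝ) : 0 ≤ levyE β u := le_of_lt (Real.exp_pos _)

lemma gauss_int : ∫ v : ℝ, Real.exp (-(v^2)/2) = Real.sqrt (2*Real.pi) := by
  have h := integral_gaussian (1/2 : ℝ)
  have heq : (fun x : ℝ => Real.exp (-(x^2)/2)) = (fun x : ℝ => Real.exp (-(1/2:ℝ) * x^2)) := by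
    funext v; ring_nf
  rw [heq]
  rw [h]
  rw [show Real.pi / (1/2) = 2 * Real.pi by ring]

lemma psi_image {β : ℝ} (hβ : 0 < β) : (fun u : ℝ => u - β/u) '' Ioi 0 = univ := by
  apply eq_univ_of_forall
  intro v
  set D := Real.sqrt (v^2 + 4*β) with hD
  have hD2 : D^2 = v^2 + 4*β := Real.sq_sqrt (by positivity)
  have hDabs : |v| < D := by
    have : Real.sqrt (v^2) < D := by
      apply Real.sqrt_lt_sqrt (by positivity); linarith
    simpa [Real.sqrt_sq_eq_abs] using this
  have hu : 0 < (v + D)/2 := by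
    have h1 := abs_le.mp (le_of_lt hDabs)
    nlinarith [neg_abs_le v]
  refine ⟨(v+D)/2, hu, ?_⟩
  have hvD : v + D ≠ 0 := by intro h; rw [h] at hu; norm_num at hu
  simp only
  rw [div_sub_div _ _ (by norm_num : (2:ℝ) ≠ 0) (by positivity)]
  rw [div_eq_iff (by positivity)]
  field_simp
  nlinarith [hD2]

lemma psi_inj {β : ℝ} (hβ : 0 < β) : InjOn (fun u : ℝ => u - β/u) (Ioi 0) := by
  have : StrictMonoOn (fun u : ℝ => u - β/u) (Ioi 0) := by
    intro a ha b hb hab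
    simp only
    have ha0 : (0:ℝ) < a := ha
    have : β/b < β/a := div_lt_div_of_pos_left hβ ha0 hab
    linarith
  exact this.injOn

lemma psi_deriv {β : ℝ} : ∀ u ∈ Ioi (0:ℝ), HasDerivWithinAt (fun u : ℝ => u - β/u)
    (1 + β/u^2) (Ioi 0) u := by
  intro u hu
  have hu0 : u ≠ 0 := ne_of_gt hu
  have h2 : HasDerivAt (fun u : ℝ => β/u) (β * -(u^2)⁻¹) u := by
    simpa [div_eq_mul_inv] using (hasDerivAt_inv hu0).const_mul β
  have h1 : HasDerivAt (fun u : ℝ => u - β/u) (1 - β * -(u^2)⁻¹) u :=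
    (hasDerivAt_id u).sub h2
  have : (1 : ℝ) - β * -(u^2)⁻¹ = 1 + β/u^2 := by field_simp; ring
  rw [this] at h1
  exact h1.hasDerivWithinAt

lemma key_eq {β : ℝ} (hβ : 0 < β) :
    ∫ u in Ioi (0:ℝ), (1 + β/u^2) * levyE β u = Real.sqrt (2*Real.pi) := by
  have h := integral_image_eq_integral_abs_deriv_smul measurableSet_Ioi (psi_deriv (β := β))
    (psi_inj hβ) (fun v => Real.exp (-(v^2)/2))
  rw [psi_image hβ] at h
  rw [setIntegral_univ] at h -- maybe Measure.restrict_univ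
  rw [gauss_int] at h
  rw [h]
  apply setIntegral_congr_fun measurableSet_Ioi
  intro u hu
  have hu0 : (0:ℝ) < u := hu
  have : |1 + β/u^2| = 1 + β/u^2 := abs_of_pos (by positivity)
  simp [this, levyE, smul_eq_mul]

lemma key_integrable {β : ℝ} (hβ : 0 < β) :
    IntegrableOn (fun u => (1 + β/u^2) * levyE β u) (Ioi (0:ℝ)) := by
  have h := (integrableOn_image_iff_integrableOn_abs_deriv_smul measurableSet_Ioi
    (psi_deriv (β := β)) (psi_inj hβ) (fun v => Real.exp (-(v^2)/2)))
  rw [psi_image hβ] at h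
  have hg : IntegrableOn (fun v : ℝ => Real.exp (-(v^2)/2)) univ := by
    rw [integrableOn_univ]
    have h0 := integrable_exp_neg_mul_sq (by norm_num : (0:ℝ) < 1/2)
    exact h0.congr (Filter.Eventually.of_forall (fun x => by ring_nf))
  have h2 := h.mp hg
  apply h2.congr_fun _ measurableSet_Ioi
  intro u hu
  have hu0 : (0:ℝ) < u := hu
  have : |1 + β/u^2| = 1 + β/u^2 := abs_of_pos (by positivity)
  simp [this, levyE, smul_eq_mul]

lemma phi_image {β : ℝ} (hβ : 0 < β) : (fun u : ℝ => β/u) '' Ioi 0 = Ioi 0 := by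
  ext x
  constructor
  · rintro ⟨u, hu, rfl⟩; exact div_pos hβ hu
  · intro hx
    exact ⟨β/x, div_pos hβ hx, by field_simp⟩

lemma phi_inj {β : ℝ} (hβ : 0 < β) : InjOn (fun u : ℝ => β/u) (Ioi 0) := by
  intro a ha b hb hab
  simp only at hab
  have ha0 : (0:ℝ) < a := ha
  have hb0 : (0:ℝ) < b := hb
  field_simp at hab
  linarith

lemma phi_deriv {β : ℝ} : ∀ u ∈ Ioi (0:ℝ), HasDerivWithinAt (fun u : ℝ => β/u)
    (-β/u^2) (Ioi 0) u := by
  intro u hu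
  have hu0 : u ≠ 0 := ne_of_gt (show (0:ℝ) < u from hu)
  have h2 : HasDerivAt (fun u : ℝ => β/u) (β * -(u^2)⁻¹) u := by
    simpa [div_eq_mul_inv] using (hasDerivAt_inv hu0).const_mul β
  have : β * -(u^2)⁻¹ = -β/u^2 := by field_simp
  rw [this] at h2
  exact h2.hasDerivWithinAt

lemma levyE_symm {β : ℝ} (hβ : 0 < β) (u : ℝ) (hu : 0 < u) : levyE β (β/u) = levyE β u := by
  unfold levyE
  congr 1
  have : β/u - β/(β/u) = -(u - β/u) := by field_simp; ring
  rw [this]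
  ring

lemma levyE_meas (β : ℝ) : Measurable (levyE β) := by
  apply Measurable.exp; fun_prop

lemma integrable_levyE {β : ℝ} (hβ : 0 < β) : IntegrableOn (levyE β) (Ioi (0:ℝ)) := by
  apply Integrable.mono (key_integrable hβ) ((levyE_meas β).aestronglyMeasurable)
  rw [ae_restrict_iff' measurableSet_Ioi]
  apply Filter.Eventually.of_forall
  intro u hu
  have hu0 : (0:ℝ) < u := hu
  have h1 : (0:ℝ) ≤ levyE β u := levyE_nonneg β u
  rw [Real.norm_eq_abs, Real.norm_eq_abs, abs_of_nonneg h1,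
    abs_of_nonneg (by positivity : (0:ℝ) ≤ (1 + β/u^2) * levyE β u)]
  nlinarith [div_nonneg (le_of_lt hβ) (sq_nonneg u)]

lemma integrable_levyE' {β : ℝ} (hβ : 0 < β) :
    IntegrableOn (fun u => (β/u^2) * levyE β u) (Ioi (0:ℝ)) := by
  apply Integrable.mono (key_integrable hβ)
  · exact (measurable_const.div (by fun_prop)).mul (levyE_meas β) |>.aestronglyMeasurable
  rw [ae_restrict_iff' measurableSet_Ioi]
  apply Filter.Eventually.of_forall
  intro u hu
  have hu0 : (0:ℝ) < u := hu
  have h1 : (0:ℝ) ≤ levyE β u := levyE_nonneg β u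
  rw [Real.norm_eq_abs, Real.norm_eq_abs,
    abs_of_nonneg (by positivity : (0:ℝ) ≤ (β/u^2) * levyE β u),
    abs_of_nonneg (by positivity : (0:ℝ) ≤ (1 + β/u^2) * levyE β u)]
  nlinarith

lemma levyE_half {β : ℝ} (hβ : 0 < β) :
    ∫ u in Ioi (0:ℝ), (β/u^2) * levyE β u = ∫ u in Ioi (0:ℝ), levyE β u := by
  have h := integral_image_eq_integral_abs_deriv_smul measurableSet_Ioi (phi_deriv (β := β))
    (phi_inj hβ) (levyE β)
  rw [phi_image hβ] at h
  rw [h]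
  apply setIntegral_congr_fun measurableSet_Ioi
  intro u hu
  have hu0 : (0:ℝ) < u := hu
  have h1 : |(-β/u^2)| = β/u^2 := by
    rw [abs_of_nonpos (by rw [neg_div]; simp; positivity)]
    rw [neg_div, neg_neg]
  simp only [smul_eq_mul, h1]
  rw [levyE_symm hβ u hu0]

lemma levyE_int {β : ℝ} (hβ : 0 < β) :
    ∫ u in Ioi (0:ℝ), levyE β u = Real.sqrt (2*Real.pi) / 2 := by
  have h1 : ∫ u in Ioi (0:ℝ), ((1 + β/u^2) * levyE β u) =
      (∫ u in Ioi (0:ℝ), levyE β u) + ∫ u in Ioi (0:ℝ), (β/u^2) * levyE β u := by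
    rw [← integral_add (integrable_levyE hβ) (integrable_levyE' hβ)]
    apply setIntegral_congr_fun measurableSet_Ioi
    intro u hu; ring
  rw [key_eq hβ, levyE_half hβ] at h1
  linarith

lemma chi_image {lam : ℝ} (hl : 0 < lam) : (fun u : ℝ => lam/u^2) '' Ioi 0 = Ioi 0 := by
  ext x
  constructor
  · rintro ⟨u, hu, rfl⟩
    exact div_pos hl (pow_pos hu 2)
  · intro hx
    have hx0 : (0:ℝ) < x := hx
    refine ⟨Real.sqrt (lam/x), Real.sqrt_pos.mpr (div_pos hl hx0), ?_⟩
    simp only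
    rw [Real.sq_sqrt (le_of_lt (div_pos hl hx0))]
    field_simp

lemma chi_inj {lam : ℝ} (hl : 0 < lam) : InjOn (fun u : ℝ => lam/u^2) (Ioi 0) := by
  intro a ha b hb hab
  simp only at hab
  have ha0 : (0:ℝ) < a := ha
  have hb0 : (0:ℝ) < b := hb
  field_simp at hab
  nlinarith [hab]

lemma chi_deriv {lam : ℝ} : ∀ u ∈ Ioi (0:ℝ), HasDerivWithinAt (fun u : ℝ => lam/u^2)
    (-2*lam/u^3) (Ioi 0) u := by
  intro u hu
  have hu0 : u ≠ 0 := ne_of_gt (show (0:ℝ) < u from hu)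
  have h1 : HasDerivAt (fun u : ℝ => (u^2)⁻¹) (-(2*u^1) / (u^2)^2) u :=
    (hasDerivAt_pow 2 u).inv (pow_ne_zero 2 hu0)
  have h2 : HasDerivAt (fun u : ℝ => lam/u^2) (lam * (-(2*u^1) / (u^2)^2)) u := by
    simpa [div_eq_mul_inv] using h1.const_mul lam
  have : lam * (-(2*u^1) / (u^2)^2) = -2*lam/u^3 := by field_simp
  rw [this] at h2
  exact h2.hasDerivWithinAt

lemma ig_chi {μ lam : ℝ} (hμ : 0 < μ) (hl : 0 < lam) {u : ℝ} (hu : 0 < u) :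
    (2*lam/u^3) * igPdf μ lam (lam/u^2) = Real.sqrt (2/Real.pi) * levyE (lam/μ) u := by
  unfold igPdf levyE
  have hπ : (0:ℝ) < Real.pi := Real.pi_pos
  have h1 : lam / (2 * Real.pi * (lam/u^2) ^ 3) = (u^3/(lam * Real.sqrt (2*Real.pi)))^2 := by
    field_simp
    rw [Real.sq_sqrt (by positivity)]
  have h2 : Real.sqrt (lam / (2 * Real.pi * (lam/u^2) ^ 3)) = u^3/(lam * Real.sqrt (2*Real.pi)) := by
    rw [h1, Real.sqrt_sq (by positivity)]
  have h3 : -lam * (lam/u^2 - μ) ^ 2 / (2 * μ ^ 2 * (lam/u^2)) = -(u - (lam/μ)/u)^2/2 := by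
    field_simp
    ring
  rw [h2, h3]
  have h4 : (2*lam/u^3) * (u^3/(lam * Real.sqrt (2*Real.pi))) = Real.sqrt (2/Real.pi) := by
    have hs : Real.sqrt (2/Real.pi) = 2 / Real.sqrt (2*Real.pi) := by
      rw [eq_div_iff (by positivity : Real.sqrt (2*Real.pi) ≠ 0)]
      rw [← Real.sqrt_mul (by positivity) ]
      rw [show 2/Real.pi * (2*Real.pi) = 4 by field_simp; ring]
      rw [show (4:ℝ) = 2^2 by norm_num, Real.sqrt_sq (by norm_num)]
    rw [hs]
    field_simp
  rw [← mul_assoc, h4]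

lemma ig_nonneg (μ lam x : ℝ) : 0 ≤ igPdf μ lam x := by
  unfold igPdf; positivity

lemma ig_int {μ lam : ℝ} (hμ : 0 < μ) (hl : 0 < lam) :
    ∫ x in Ioi (0:ℝ), igPdf μ lam x = 1 := by
  have h := integral_image_eq_integral_abs_deriv_smul measurableSet_Ioi (chi_deriv (lam := lam))
    (chi_inj hl) (igPdf μ lam)
  rw [chi_image hl] at h
  rw [h]
  have heq : ∀ u ∈ Ioi (0:ℝ), |(-2*lam/u^3)| • igPdf μ lam (lam/u^2)
      = Real.sqrt (2/Real.pi) * levyE (lam/μ) u := by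
    intro u hu
    have hu0 : (0:ℝ) < u := hu
    rw [smul_eq_mul, abs_of_nonpos (by rw [neg_mul, neg_div]; simp; positivity)]
    rw [show -(-2*lam/u^3) = 2*lam/u^3 by ring]
    exact ig_chi hμ hl hu0
  rw [setIntegral_congr_fun measurableSet_Ioi heq]
  rw [integral_const_mul, levyE_int (div_pos hl hμ)]
  rw [show Real.sqrt (2/Real.pi) = 2/Real.sqrt (2*Real.pi) by
    rw [eq_div_iff (by positivity : Real.sqrt (2*Real.pi) ≠ 0)]
    rw [← Real.sqrt_mul (by positivity)]
    rw [show 2/Real.pi * (2*Real.pi) = 4 by field_simp; ring]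
    rw [show (4:ℝ) = 2^2 by norm_num, Real.sqrt_sq (by norm_num)]]
  have : Real.sqrt (2*Real.pi) ≠ 0 := by positivity
  field_simp

lemma ig_integrable {μ lam : ℝ} (hμ : 0 < μ) (hl : 0 < lam) :
    IntegrableOn (igPdf μ lam) (Ioi (0:ℝ)) := by
  have h := integrableOn_image_iff_integrableOn_abs_deriv_smul measurableSet_Ioi
    (chi_deriv (lam := lam)) (chi_inj hl) (igPdf μ lam)
  rw [chi_image hl] at h
  rw [h]
  have heq : ∀ u ∈ Ioi (0:ℝ), Real.sqrt (2/Real.pi) * levyE (lam/μ) u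
      = |(-2*lam/u^3)| • igPdf μ lam (lam/u^2) := by
    intro u hu
    have hu0 : (0:ℝ) < u := hu
    rw [smul_eq_mul, abs_of_nonpos (by rw [neg_mul, neg_div]; simp; positivity)]
    rw [show -(-2*lam/u^3) = 2*lam/u^3 by ring]
    exact (ig_chi hμ hl hu0).symm
  apply IntegrableOn.congr_fun _ heq measurableSet_Ioi
  exact (integrable_levyE (div_pos hl hμ)).const_mul _

lemma ig_meas (μ lam : ℝ) : Measurable (igPdf μ lam) := by
  unfold igPdf
  fun_prop

lemma igMeasure_apply {μ lam : ℝ} (hμ : 0 < μ) (hl : 0 < lam) {s : Set ℝ}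
    (hs : MeasurableSet s) :
    (igMeasure μ lam s).toReal = ∫ x in s ∩ Ioi 0, igPdf μ lam x := by
  have hind : (fun x : ℝ => if 0 < x then igPdf μ lam x else 0)
      = (Ioi (0:ℝ)).indicator (igPdf μ lam) := by
    funext x
    rw [indicator_apply]
    simp [mem_Ioi]
  have hint : Integrable ((Ioi (0:ℝ)).indicator (igPdf μ lam)) := by
    rw [integrable_indicator_iff measurableSet_Ioi]
    exact ig_integrable hμ hl
  have hnn : 0 ≤ᵐ[volume.restrict s] (Ioi (0:ℝ)).indicator (igPdf μ lam) :=
    Filter.Eventually.of_forall (fun x => indicator_nonneg (fun y _ => ig_nonneg μ lam y) x)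
  rw [igMeasure, withDensity_apply _ hs]
  have hind' : ∀ a : ℝ, ENNReal.ofReal (if 0 < a then igPdf μ lam a else 0)
      = ENNReal.ofReal ((Ioi (0:ℝ)).indicator (igPdf μ lam) a) := fun a => by
    rw [indicator_apply]; simp [mem_Ioi]
  simp only [hind']
  rw [← ofReal_integral_eq_lintegral_ofReal hint.restrict hnn]
  rw [ENNReal.toReal_ofReal (integral_nonneg
    (fun x => indicator_nonneg (fun y _ => ig_nonneg μ lam y) x))]
  rw [setIntegral_indicator measurableSet_Ioi]

lemma env_eq {lam : ℝ} (hl : 0 < lam) {x : ℝ} (hx : 0 < x) :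
    Real.sqrt (lam / (2 * Real.pi * x ^ 3))
      = Real.sqrt (lam / (2 * Real.pi)) * x ^ (-(3/2) : ℝ) := by
  have hπ := Real.pi_pos
  have h1 : lam / (2 * Real.pi * x ^ 3) = (lam / (2 * Real.pi)) * (x^3)⁻¹ := by
    field_simp
  rw [h1, Real.sqrt_mul (by positivity), Real.sqrt_inv]
  congr 1
  rw [Real.rpow_neg (le_of_lt hx)]
  congr 1
  rw [Real.sqrt_eq_rpow, ← Real.rpow_natCast x 3, ← Real.rpow_mul (le_of_lt hx)]
  norm_num

lemma env_int {lam m : ℝ} (hl : 0 < lam) (hm : 0 < m) :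
    ∫ x in Ioi m, Real.sqrt (lam / (2 * Real.pi * x ^ 3))
      = Real.sqrt (2 * lam / (Real.pi * m)) := by
  have hπ := Real.pi_pos
  rw [setIntegral_congr_fun measurableSet_Ioi
    (fun x hx => env_eq hl (lt_trans hm hx))]
  rw [integral_const_mul, integral_Ioi_rpow_of_lt (by norm_num) hm]
  have h2 : -m ^ ((-(3/2):ℝ) + 1) / ((-(3/2):ℝ) + 1) = 2 * m ^ ((-(1/2)):ℝ) := by
    norm_num
    ring
  rw [h2]
  have h3 : m ^ ((-(1/2)):ℝ) = (Real.sqrt m)⁻¹ := by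
    rw [Real.rpow_neg (le_of_lt hm), Real.sqrt_eq_rpow]
  rw [h3]
  rw [show (2:ℝ) * lam / (Real.pi * m) = (lam / (2*Real.pi)) * (2 * (Real.sqrt m)⁻¹)^2 by
    rw [mul_pow]; rw [sq (Real.sqrt m)⁻¹, ← mul_inv, Real.mul_self_sqrt (le_of_lt hm)]
    field_simp]
  rw [Real.sqrt_mul (by positivity), Real.sqrt_sq (by positivity)]

lemma pointwise_small {μ₁ μ₂ lam x : ℝ} (h₁ : 0 < μ₁) (h₁₂ : μ₁ ≤ μ₂) (hl : 0 < lam)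
    (hx : 0 < x) (hxm : x ≤ μ₁) :
    |igPdf μ₁ lam x - igPdf μ₂ lam x| ≤ (lam/μ₁) * igPdf μ₁ lam x := by
  have h₂ : 0 < μ₂ := lt_of_lt_of_le h₁ h₁₂
  set c := Real.sqrt (lam / (2 * Real.pi * x ^ 3)) with hc
  have hc0 : 0 ≤ c := Real.sqrt_nonneg _
  set e₁ := -lam * (x - μ₁) ^ 2 / (2 * μ₁ ^ 2 * x) with he1
  set e₂ := -lam * (x - μ₂) ^ 2 / (2 * μ₂ ^ 2 * x) with he2
  have hdiff : e₁ - e₂ = (lam/2) * (1/μ₁ - 1/μ₂) * (2 - x/μ₁ - x/μ₂) := by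
    rw [he1, he2]; field_simp; ring
  have hf1 : 0 ≤ 1/μ₁ - 1/μ₂ := by
    have := one_div_le_one_div_of_le h₁ h₁₂
    linarith
  have hf1' : 1/μ₁ - 1/μ₂ ≤ 1/μ₁ := by
    have : 0 < 1/μ₂ := by positivity
    linarith
  have hf2 : 0 ≤ 2 - x/μ₁ - x/μ₂ := by
    have hq1 : x/μ₁ ≤ 1 := (div_le_one h₁).mpr hxm
    have hq2 : x/μ₂ ≤ 1 := (div_le_one h₂).mpr (le_trans hxm h₁₂)
    linarith
  have hf2' : 2 - x/μ₁ - x/μ₂ ≤ 2 := by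
    have : 0 ≤ x/μ₁ := by positivity
    have : 0 ≤ x/μ₂ := by positivity
    linarith
  have hde : 0 ≤ e₁ - e₂ := by
    rw [hdiff]; positivity
  have hde' : e₁ - e₂ ≤ lam/μ₁ := by
    rw [hdiff]
    have h3 : (lam/2) * (1/μ₁ - 1/μ₂) * (2 - x/μ₁ - x/μ₂) ≤ (lam/2) * (1/μ₁) * 2 := by
      apply mul_le_mul
      · apply mul_le_mul le_rfl hf1' hf1 (by positivity)
      · exact hf2'
      · exact hf2
      · positivity
    calc (lam/2) * (1/μ₁ - 1/μ₂) * (2 - x/μ₁ - x/μ₂) ≤ (lam/2) * (1/μ₁) * 2 := h3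
      _ = lam/μ₁ := by ring
  have key : igPdf μ₁ lam x - igPdf μ₂ lam x = c * Real.exp e₁ * (1 - Real.exp (e₂ - e₁)) := by
    unfold igPdf
    rw [← hc, ← he1, ← he2]
    have hmul : Real.exp e₁ * Real.exp (e₂ - e₁) = Real.exp e₂ := by
      rw [← Real.exp_add]; ring_nf
    rw [mul_sub, mul_one, mul_assoc, hmul]
  have hexp : 1 - Real.exp (e₂ - e₁) ≤ e₁ - e₂ := by
    have := Real.add_one_le_exp (e₂ - e₁)
    linarith
  have hexp0 : 0 ≤ 1 - Real.exp (e₂ - e₁) := by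
    have : Real.exp (e₂ - e₁) ≤ 1 := Real.exp_le_one_iff.mpr (by linarith)
    linarith
  have habs : |igPdf μ₁ lam x - igPdf μ₂ lam x| = igPdf μ₁ lam x - igPdf μ₂ lam x := by
    apply abs_of_nonneg
    rw [key]
    positivity
  rw [habs, key]
  calc c * Real.exp e₁ * (1 - Real.exp (e₂ - e₁)) ≤ c * Real.exp e₁ * (lam/μ₁) := by
        apply mul_le_mul_of_nonneg_left (le_trans hexp hde') (by positivity)
    _ = (lam/μ₁) * igPdf μ₁ lam x := by unfold igPdf; rw [← hc, ← he1]; ring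

lemma pointwise_env {μ lam x : ℝ} (hx : 0 < x) (hμ : 0 < μ) (hl : 0 < lam) :
    igPdf μ lam x ≤ Real.sqrt (lam / (2 * Real.pi * x ^ 3)) := by
  unfold igPdf
  have h1 : Real.exp (-lam * (x - μ) ^ 2 / (2 * μ ^ 2 * x)) ≤ 1 := by
    apply Real.exp_le_one_iff.mpr
    have : 0 ≤ lam * (x - μ)^2 / (2 * μ^2 * x) := by positivity
    rw [neg_mul, neg_div]
    linarith
  nlinarith [Real.sqrt_nonneg (lam / (2 * Real.pi * x ^ 3)),
    Real.exp_pos (-lam * (x - μ) ^ 2 / (2 * μ ^ 2 * x))]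

lemma env_integrable {lam m : ℝ} (hl : 0 < lam) (hm : 0 < m) :
    IntegrableOn (fun x => Real.sqrt (lam / (2 * Real.pi * x ^ 3))) (Ioi m) := by
  have h := (integrableOn_Ioi_rpow_of_lt (show (-(3/2):ℝ) < -1 by norm_num) hm).const_mul
    (Real.sqrt (lam / (2 * Real.pi)))
  exact IntegrableOn.congr_fun h (fun x hx => (env_eq hl (lt_trans hm hx)).symm)
    measurableSet_Ioi

lemma tv_int_bound {μ₁ μ₂ lam : ℝ} (h₁ : 0 < μ₁) (h₂ : 0 < μ₂) (h₁₂ : μ₁ ≤ μ₂) (hl : 0 < lam) :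
    ∫ x in Ioi (0:ℝ), |igPdf μ₁ lam x - igPdf μ₂ lam x|
      ≤ Real.sqrt (2 * lam / (Real.pi * μ₁)) + lam/μ₁ := by
  set G := fun x => |igPdf μ₁ lam x - igPdf μ₂ lam x| with hG
  have hGint : IntegrableOn G (Ioi (0:ℝ)) :=
    ((ig_integrable h₁ hl).sub (ig_integrable h₂ hl)).abs
  have hGnn : ∀ x, 0 ≤ G x := fun x => abs_nonneg _
  have hsplit : Ioc (0:ℝ) μ₁ ∪ Ioi μ₁ = Ioi (0:ℝ) := Ioc_union_Ioi_eq_Ioi (le_of_lt h₁)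
  rw [← hsplit]
  rw [setIntegral_union (Ioc_disjoint_Ioi le_rfl) measurableSet_Ioi
    (hGint.mono_set (by rw [← hsplit]; exact subset_union_left))
    (hGint.mono_set (by rw [← hsplit]; exact subset_union_right))]
  have hpart1 : ∫ x in Ioc (0:ℝ) μ₁, G x ≤ lam/μ₁ := by
    have step1 : ∫ x in Ioc (0:ℝ) μ₁, G x ≤ ∫ x in Ioc (0:ℝ) μ₁, (lam/μ₁) * igPdf μ₁ lam x := by
      apply setIntegral_mono_on
        (hGint.mono_set (by rw [← hsplit]; exact subset_union_left))
        (IntegrableOn.mono_set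
          (show IntegrableOn (fun x => (lam/μ₁) * igPdf μ₁ lam x) (Ioi (0:ℝ)) volume from
            (ig_integrable h₁ hl).const_mul _)
          (by rw [← hsplit]; exact subset_union_left))
        measurableSet_Ioc
      intro x hx
      exact pointwise_small h₁ h₁₂ hl hx.1 hx.2
    have step2 : ∫ x in Ioc (0:ℝ) μ₁, (lam/μ₁) * igPdf μ₁ lam x ≤ lam/μ₁ := by
      rw [integral_const_mul]
      have : ∫ x in Ioc (0:ℝ) μ₁, igPdf μ₁ lam x ≤ ∫ x in Ioi (0:ℝ), igPdf μ₁ lam x := by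
        apply setIntegral_mono_set (ig_integrable h₁ hl)
          (Filter.Eventually.of_forall (fun x => ig_nonneg _ _ _))
          (HasSubset.Subset.eventuallyLE (by rw [← hsplit]; exact subset_union_left))
      rw [ig_int h₁ hl] at this
      calc lam/μ₁ * ∫ x in Ioc (0:ℝ) μ₁, igPdf μ₁ lam x ≤ lam/μ₁ * 1 :=
            mul_le_mul_of_nonneg_left this (by positivity)
        _ = lam/μ₁ := mul_one _
    linarith
  have hpart2 : ∫ x in Ioi μ₁, G x ≤ Real.sqrt (2 * lam / (Real.pi * μ₁)) := by
    have step1 : ∫ x in Ioi μ₁, G x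
        ≤ ∫ x in Ioi μ₁, Real.sqrt (lam / (2 * Real.pi * x ^ 3)) := by
      apply setIntegral_mono_on
        (hGint.mono_set (by rw [← hsplit]; exact subset_union_right))
        (env_integrable hl h₁) measurableSet_Ioi
      intro x hx
      have hx0 : (0:ℝ) < x := lt_trans h₁ hx
      have e1 := pointwise_env hx0 h₁ hl (lam := lam)
      have e2 := pointwise_env hx0 h₂ hl (lam := lam)
      have n1 := ig_nonneg μ₁ lam x
      have n2 := ig_nonneg μ₂ lam x
      rw [hG, abs_le]
      constructor <;> nlinarith
    rw [env_int hl h₁] at step1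
    exact step1
  linarith

lemma tv_half {μ₁ μ₂ lam : ℝ} (h₁ : 0 < μ₁) (h₂ : 0 < μ₂) (hl : 0 < lam) {A : Set ℝ}
    (hA : MeasurableSet A) (hsub : A ⊆ Ioi 0) :
    |∫ x in A, (igPdf μ₁ lam x - igPdf μ₂ lam x)|
      ≤ (1/2) * ∫ x in Ioi (0:ℝ), |igPdf μ₁ lam x - igPdf μ₂ lam x| := by
  have main : ∀ g : ℝ → ℝ, IntegrableOn g (Ioi (0:ℝ)) → (∫ x in Ioi (0:ℝ), g x) = 0 →
      ∫ x in A, g x ≤ (1/2) * ∫ x in Ioi (0:ℝ), |g x| := by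
    intro g hgi hg0
    have hpos : IntegrableOn (fun x => max (g x) 0) (Ioi (0:ℝ)) := hgi.pos_part
    have s1 : ∫ x in A, g x ≤ ∫ x in A, max (g x) 0 := by
      apply setIntegral_mono (hgi.mono_set hsub) (hpos.mono_set hsub)
      intro x; exact le_max_left _ _
    have s2 : ∫ x in A, max (g x) 0 ≤ ∫ x in Ioi (0:ℝ), max (g x) 0 := by
      apply setIntegral_mono_set hpos
        (Filter.Eventually.of_forall (fun x => le_max_right _ _))
        (HasSubset.Subset.eventuallyLE hsub)
    have s3 : ∫ x in Ioi (0:ℝ), max (g x) 0 = (1/2) * ∫ x in Ioi (0:ℝ), |g x| := by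
      have hptw : ∀ x, max (g x) 0 = (1/2) * (g x + |g x|) := by
        intro x
        rcases le_total (g x) 0 with h | h
        · rw [max_eq_right h, abs_of_nonpos h]; ring
        · rw [max_eq_left h, abs_of_nonneg h]; ring
      simp only [hptw]
      rw [integral_const_mul, integral_add hgi hgi.abs, hg0, zero_add]
    linarith
  have habs : IntegrableOn (fun x => igPdf μ₁ lam x - igPdf μ₂ lam x) (Ioi (0:ℝ)) :=
    (ig_integrable h₁ hl).sub (ig_integrable h₂ hl)
  have hzero : (∫ x in Ioi (0:ℝ), (igPdf μ₁ lam x - igPdf μ₂ lam x)) = 0 := by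
    rw [integral_sub (ig_integrable h₁ hl) (ig_integrable h₂ hl), ig_int h₁ hl, ig_int h₂ hl,
      sub_self]
  have h1 := main _ habs hzero
  have h2 : ∫ x in A, (igPdf μ₂ lam x - igPdf μ₁ lam x)
      ≤ (1/2) * ∫ x in Ioi (0:ℝ), |igPdf μ₂ lam x - igPdf μ₁ lam x| := by
    apply main (fun x => igPdf μ₂ lam x - igPdf μ₁ lam x)
      ((ig_integrable h₂ hl).sub (ig_integrable h₁ hl))
    rw [integral_sub (ig_integrable h₂ hl) (ig_integrable h₁ hl), ig_int h₂ hl, ig_int h₁ hl,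
      sub_self]
  have habs_comm : (∫ x in Ioi (0:ℝ), |igPdf μ₂ lam x - igPdf μ₁ lam x|)
      = ∫ x in Ioi (0:ℝ), |igPdf μ₁ lam x - igPdf μ₂ lam x| := by
    apply setIntegral_congr_fun measurableSet_Ioi
    intro x _
    exact abs_sub_comm _ _
  have hsubint : (∫ x in A, (igPdf μ₂ lam x - igPdf μ₁ lam x))
      = -∫ x in A, (igPdf μ₁ lam x - igPdf μ₂ lam x) := by
    rw [← integral_neg]
    apply setIntegral_congr_fun hA
    intro x _; ring
  rw [habs_comm, hsubint] at h2
  exact abs_le.mpr ⟨by linarith, h1⟩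

theorem main_le {μ₁ μ₂ lam : ℝ} (h₁ : 0 < μ₁) (h₂ : 0 < μ₂) (hl : 0 < lam) (h₁₂ : μ₁ ≤ μ₂)
    {s : Set ℝ} (hs : MeasurableSet s) :
    |(igMeasure μ₁ lam s).toReal - (igMeasure μ₂ lam s).toReal|
      ≤ 2 * Real.sqrt (lam / (Real.pi * μ₁)) := by
  have hπ := Real.pi_pos
  rw [igMeasure_apply h₁ hl hs, igMeasure_apply h₂ hl hs]
  set A := s ∩ Ioi 0 with hA
  have hAm : MeasurableSet A := hs.inter measurableSet_Ioi
  have hAsub : A ⊆ Ioi 0 := inter_subset_right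
  have hi1 : IntegrableOn (igPdf μ₁ lam) A := (ig_integrable h₁ hl).mono_set hAsub
  have hi2 : IntegrableOn (igPdf μ₂ lam) A := (ig_integrable h₂ hl).mono_set hAsub
  rw [← integral_sub hi1 hi2]
  set r := Real.sqrt (lam / (Real.pi * μ₁)) with hr
  have hr0 : 0 ≤ r := Real.sqrt_nonneg _
  have hr2 : r^2 = lam / (Real.pi * μ₁) := Real.sq_sqrt (by positivity)
  by_cases hc : Real.pi * μ₁ ≤ 4 * lam
  · -- trivial case
    have b1 : ∀ μ, 0 < μ → (0:ℝ) ≤ ∫ x in A, igPdf μ lam x := by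
      intro μ hμ
      exact setIntegral_nonneg hAm (fun x _ => ig_nonneg _ _ _)
    have b2 : ∀ μ, 0 < μ → (∫ x in A, igPdf μ lam x) ≤ 1 := by
      intro μ hμ
      have : ∫ x in A, igPdf μ lam x ≤ ∫ x in Ioi (0:ℝ), igPdf μ lam x := by
        apply setIntegral_mono_set (ig_integrable hμ hl)
          (Filter.Eventually.of_forall (fun x => ig_nonneg _ _ _))
          (HasSubset.Subset.eventuallyLE hAsub)
      rw [ig_int hμ hl] at this
      exact this
    have hb : |∫ x in A, (igPdf μ₁ lam x - igPdf μ₂ lam x)| ≤ 1 := by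
      rw [integral_sub hi1 hi2]
      have := b1 μ₁ h₁; have := b2 μ₁ h₁; have := b1 μ₂ h₂; have := b2 μ₂ h₂
      rw [abs_le]; constructor <;> linarith
    have hq : (1:ℝ)/4 ≤ lam / (Real.pi * μ₁) := by
      rw [div_le_div_iff₀ (by norm_num) (by positivity)]
      linarith
    have : (1:ℝ) ≤ 2 * r := by nlinarith
    linarith [abs_nonneg (∫ x in A, (igPdf μ₁ lam x - igPdf μ₂ lam x))]
  · -- analytic case
    push_neg at hc
    have hq : lam / (Real.pi * μ₁) ≤ 1/4 := by
      rw [div_le_div_iff₀ (by positivity) (by norm_num)]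
      linarith
    have hrhalf : r ≤ 1/2 := by nlinarith
    have hsqrt2 : Real.sqrt 2 ≤ 3/2 := by
      nlinarith [Real.sq_sqrt (by norm_num : (0:ℝ) ≤ 2), Real.sqrt_nonneg 2]
    have e1 : Real.sqrt (2 * lam / (Real.pi * μ₁)) = Real.sqrt 2 * r := by
      rw [hr, ← Real.sqrt_mul (by norm_num : (0:ℝ) ≤ 2)]
      congr 1; ring
    have e2 : lam/μ₁ = Real.pi * r^2 := by
      rw [hr2]; field_simp
    have hbound := tv_int_bound h₁ h₂ h₁₂ hl
    calc |∫ x in A, (igPdf μ₁ lam x - igPdf μ₂ lam x)|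
        ≤ (1/2) * ∫ x in Ioi (0:ℝ), |igPdf μ₁ lam x - igPdf μ₂ lam x| :=
          tv_half h₁ h₂ hl hAm hAsub
      _ ≤ (1/2) * (Real.sqrt (2 * lam / (Real.pi * μ₁)) + lam/μ₁) := by linarith
      _ ≤ 2 * r := by
          rw [e1, e2]
          nlinarith [Real.pi_le_four, Real.pi_pos]

/-- TV(IG(μ₁,λ), IG(μ₂,λ)) ≤ 2·√(λ/(π·min{μ₁,μ₂})), stated as the bound holding for
every measurable event. -/
theorem stmt9 (μ₁ μ₂ lam : ℝ) (h₁ : 0 < μ₁) (h₂ : 0 < μ₂) (hl : 0 < lam) :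
    ∀ s : Set ℝ, MeasurableSet s →
      |(igMeasure μ₁ lam s).toReal - (igMeasure μ₂ lam s).toReal|
        ≤ 2 * Real.sqrt (lam / (Real.pi * min μ₁ μ₂)) := by
  intro s hs
  rcases le_total μ₁ μ₂ with h | h
  · rw [min_eq_left h]
    exact main_le h₁ h₂ hl h hs
  · rw [min_eq_right h, abs_sub_comm]
    exact main_le h₂ h₁ hl h hs
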